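/- Let n ≥ 1, let U be a real orthogonal n×n matrix, let λ, f : Fin n → ℝ, let L = U · diag(λ) · Uᵀ, and let F = U · diag(f) · Uᵀ be a high-pass filter, meaning that for all indices i, j, if λᵢ ≤ λⱼ then fᵢ² ≤ fⱼ². Then for every x ∈ ℝⁿ with x ≠ 0 and Fx ≠ 0, setting z = Fx, one has zᵀLz / (zᵀz) ≥ xᵀLx / (xᵀx); that is, a high-pass filter coarsens the graph signal (ΔS = S(z) − S(x) ≥ 0). -/

import Mathlib

open Matrix BigOperators

lemma weighted_chebyshev' {n : ℕ} (a lam w : Fin n → ℝ)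
    (ha : ∀ i, 0 ≤ a i)
    (h : ∀ i j, 0 ≤ (lam i - lam j) * (w i - w j)) :
    (∑ i, lam i * a i) * (∑ i, w i * a i) ≤
      (∑ i, lam i * w i * a i) * (∑ i, a i) := by
  have e : ∀ i j : Fin n, a i * a j * ((lam i - lam j) * (w i - w j))
      = (lam i * w i * a i) * a j + a i * (lam j * w j * a j)
        - (lam i * a i) * (w j * a j) - (w i * a i) * (lam j * a j) := by
    intro i j; ring
  have key : ∑ i, ∑ j, a i * a j * ((lam i - lam j) * (w i - w j))
      = 2 * ((∑ i, lam i * w i * a i) * (∑ i, a i)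
            - (∑ i, lam i * a i) * (∑ i, w i * a i)) := by
    simp_rw [e]
    simp_rw [Finset.sum_sub_distrib, Finset.sum_add_distrib]
    simp_rw [← Finset.sum_mul_sum]
    ring
  have pos : 0 ≤ ∑ i, ∑ j, a i * a j * ((lam i - lam j) * (w i - w j)) := by
    apply Finset.sum_nonneg; intro i _
    apply Finset.sum_nonneg; intro j _
    exact mul_nonneg (mul_nonneg (ha i) (ha j)) (h i j)
  rw [key] at pos
  linarith

theorem high_pass_filter_coarsens_signal
    (n : ℕ) (hn : 1 ≤ n) (U : Matrix (Fin n) (Fin n) ℝ)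
    (hU : U * Uᵀ = 1 ∧ Uᵀ * U = 1) (lam f : Fin n → ℝ)
    (L F : Matrix (Fin n) (Fin n) ℝ)
    (hL : L = U * Matrix.diagonal lam * Uᵀ)
    (hF : F = U * Matrix.diagonal f * Uᵀ)
    (hhigh : ∀ i j, lam i ≤ lam j → (f i) ^ 2 ≤ (f j) ^ 2)
    (x : Fin n → ℝ) (hx : x ≠ 0)
    (z : Fin n → ℝ) (hz : z = F *ᵥ x) (hz0 : z ≠ 0) :
    (x ⬝ᵥ (L *ᵥ x)) / (x ⬝ᵥ x) ≤ (z ⬝ᵥ (L *ᵥ z)) / (z ⬝ᵥ z) := by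
  obtain ⟨hU1, hU2⟩ := hU
  set y : Fin n → ℝ := Uᵀ *ᵥ x with hy
  -- Uᵀ z = diag f *ᵥ y
  have hUz : Uᵀ *ᵥ z = Matrix.diagonal f *ᵥ y := by
    rw [hz, hF, hy, ← Matrix.mulVec_mulVec, ← Matrix.mulVec_mulVec,
      Matrix.mulVec_mulVec, hU2, Matrix.one_mulVec]
  -- dot products in the eigenbasis
  have dot_eq : ∀ v : Fin n → ℝ, v ⬝ᵥ v = (Uᵀ *ᵥ v) ⬝ᵥ (Uᵀ *ᵥ v) := by
    intro v
    rw [Matrix.dotProduct_mulVec, Matrix.vecMul_transpose, Matrix.mulVec_mulVec,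
      hU1, Matrix.one_mulVec]
  have dotL_eq : ∀ v : Fin n → ℝ,
      v ⬝ᵥ (L *ᵥ v) = (Uᵀ *ᵥ v) ⬝ᵥ (Matrix.diagonal lam *ᵥ (Uᵀ *ᵥ v)) := by
    intro v
    rw [hL, ← Matrix.mulVec_mulVec, ← Matrix.mulVec_mulVec,
      Matrix.dotProduct_mulVec, ← Matrix.mulVec_transpose]
  have hdiag : ∀ (d : Fin n → ℝ) (v : Fin n → ℝ),
      v ⬝ᵥ (Matrix.diagonal d *ᵥ v) = ∑ i, d i * (v i)^2 := by
    intro d v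
    simp [dotProduct, Matrix.mulVec_diagonal]
    apply Finset.sum_congr rfl
    intro i _; ring
  have hdiag2 : ∀ (d : Fin n → ℝ) (v : Fin n → ℝ),
      (Matrix.diagonal d *ᵥ v) ⬝ᵥ (Matrix.diagonal lam *ᵥ (Matrix.diagonal d *ᵥ v))
        = ∑ i, lam i * (d i)^2 * (v i)^2 := by
    intro d v
    simp [dotProduct, Matrix.mulVec_diagonal]
    apply Finset.sum_congr rfl
    intro i _; ring
  have hdd : ∀ (d : Fin n → ℝ) (v : Fin n → ℝ),
      (Matrix.diagonal d *ᵥ v) ⬝ᵥ (Matrix.diagonal d *ᵥ v) = ∑ i, (d i)^2 * (v i)^2 := by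
    intro d v
    simp [dotProduct, Matrix.mulVec_diagonal]
    apply Finset.sum_congr rfl
    intro i _; ring
  have hxx : x ⬝ᵥ x = ∑ i, (y i)^2 := by
    rw [dot_eq x, ← hy]; simp [dotProduct, sq]
  have hxLx : x ⬝ᵥ (L *ᵥ x) = ∑ i, lam i * (y i)^2 := by
    rw [dotL_eq x, ← hy, hdiag]
  have hzz : z ⬝ᵥ z = ∑ i, (f i)^2 * (y i)^2 := by
    rw [dot_eq z, hUz, hdd]
  have hzLz : z ⬝ᵥ (L *ᵥ z) = ∑ i, lam i * (f i)^2 * (y i)^2 := by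
    rw [dotL_eq z, hUz, hdiag2]
  have dpos : ∀ v : Fin n → ℝ, v ≠ 0 → 0 < v ⬝ᵥ v := by
    intro v hv
    obtain ⟨i, hi⟩ := Function.ne_iff.mp hv
    simp only [dotProduct]
    exact Finset.sum_pos' (fun j _ => mul_self_nonneg _)
      ⟨i, Finset.mem_univ i, mul_self_pos.mpr hi⟩
  have hxp : 0 < x ⬝ᵥ x := dpos x hx
  have hzp : 0 < z ⬝ᵥ z := dpos z hz0
  rw [div_le_div_iff₀ hxp hzp, hxx, hxLx, hzz, hzLz]
  have := weighted_chebyshev' (fun i => (y i)^2) lam (fun i => (f i)^2)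
    (fun i => sq_nonneg _) ?_
  · exact this
  · intro i j
    rcases le_total (lam i) (lam j) with h | h
    · have := hhigh i j h
      nlinarith
    · have := hhigh j i h
      nlinarith
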